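/- Let (X,Y) have joint pmf P_{XY} on finite alphabets 𝒳 × 𝒴 with full-support marginals, and suppose I(X;Y) > 0. Then s*(X;Y) equals the supremum, over all finite alphabets 𝒰 and all joint pmfs of (U,X,Y) of the form p(u,x) P_{Y|X}(y|x) whose (X,Y)-marginal is P_{XY} and for which I(X;U) > 0, of the ratio I(Y;U)/I(X;U). In particular, the constant s*(X;Y) in the strong data processing inequality I(Y;U) ≤ s*(X;Y) I(X;U) is tight: it cannot be replaced by any smaller constant. -/

import Mathlib

open scoped BigOperators

noncomputable section

/-- A probability mass function on a finite type, as a real-valued function. -/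
def IsPMF {α : Type*} [Fintype α] (p : α → ℝ) : Prop :=
  (∀ a, 0 ≤ p a) ∧ ∑ a, p a = 1

/-- Kullback–Leibler divergence `D(q ‖ p)` between pmfs on a finite type. -/
def klDiv {α : Type*} [Fintype α] (q p : α → ℝ) : ℝ :=
  ∑ a, q a * Real.logb 2 (q a / p a)

variable {𝓧 𝓨 : Type*} [Fintype 𝓧] [Fintype 𝓨]

/-- x-marginal of a joint pmf. -/
def margX (P : 𝓧 → 𝓨 → ℝ) (x : 𝓧) : ℝ := ∑ y, P x y

/-- y-marginal of a joint pmf. -/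
def margY (P : 𝓧 → 𝓨 → ℝ) (y : 𝓨) : ℝ := ∑ x, P x y

/-- Output distribution of channel `P_{Y|X}` (from joint pmf `P`) driven by input `Q`. -/
def chanOut (P : 𝓧 → 𝓨 → ℝ) (Q : 𝓧 → ℝ) (y : 𝓨) : ℝ :=
  ∑ x, Q x * (P x y / margX P x)

/-- `s*(X;Y)`, for `(X,Y)` with joint pmf `P`. -/
def sStar (P : 𝓧 → 𝓨 → ℝ) : ℝ :=
  sSup { r : ℝ | ∃ Q : 𝓧 → ℝ, IsPMF Q ∧ Q ≠ margX P ∧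
    r = klDiv (chanOut P Q) (margY P) / klDiv Q (margX P) }

/-- Mutual information `I(X;Y)` of a joint pmf. -/
def mutualInfo (P : 𝓧 → 𝓨 → ℝ) : ℝ :=
  ∑ x, ∑ y, P x y * Real.logb 2 (P x y / (margX P x * margY P y))

/-- swapped joint pmf, for `s*(Y;X)` etc. -/
def swap (P : 𝓧 → 𝓨 → ℝ) : 𝓨 → 𝓧 → ℝ := fun y x => P x y

/-- n-fold memoryless extension of a joint source. -/
def iid (P : 𝓧 → 𝓨 → ℝ) (n : ℕ) : (Fin n → 𝓧) → (Fin n → 𝓨) → ℝ :=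
  fun xs ys => ∏ i, P (xs i) (ys i)


section Aux

open Finset

variable {α : Type*} [Fintype α]

lemma klDiv_eq (q p : α → ℝ) :
    klDiv q p = (∑ a, q a * Real.log (q a / p a)) / Real.log 2 := by
  simp [klDiv, Real.logb, Finset.sum_div, mul_div_assoc]

lemma term_flip (q p : ℝ) : q * Real.log (q / p) = -(q * Real.log (p / q)) := by
  rw [show q / p = (p / q)⁻¹ from (inv_div p q).symm, Real.log_inv]; ring

lemma term_le {q p : ℝ} (hq : 0 ≤ q) (hp : 0 ≤ p) (hqp : 0 < q → 0 < p) :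
    q * Real.log (p / q) ≤ p - q := by
  rcases eq_or_lt_of_le hq with h | h
  · simp [← h, hp]
  · have hp' := hqp h
    have hd : 0 < p / q := div_pos hp' h
    have h1 := Real.log_le_sub_one_of_pos hd
    have h2 : q * Real.log (p / q) ≤ q * (p / q - 1) := by nlinarith
    calc q * Real.log (p/q) ≤ q * (p/q - 1) := h2
    _ = p - q := by field_simp

lemma nkl_nonneg {q p : α → ℝ} (hq0 : ∀ a, 0 ≤ q a) (hq1 : ∑ a, q a = 1)
    (hp0 : ∀ a, 0 ≤ p a) (hp1 : ∑ a, p a ≤ 1) (hqp : ∀ a, 0 < q a → 0 < p a) :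
    0 ≤ ∑ a, q a * Real.log (q a / p a) := by
  have h : ∑ a, q a * Real.log (p a / q a) ≤ ∑ a, (p a - q a) :=
    Finset.sum_le_sum fun a _ => term_le (hq0 a) (hp0 a) (hqp a)
  rw [Finset.sum_sub_distrib, hq1] at h
  have h2 : ∑ a, q a * Real.log (q a / p a) = -∑ a, q a * Real.log (p a / q a) := by
    rw [← Finset.sum_neg_distrib]
    exact Finset.sum_congr rfl fun a _ => term_flip _ _
  rw [h2]; linarith

lemma nkl_pos {q p : α → ℝ} (hq0 : ∀ a, 0 ≤ q a) (hq1 : ∑ a, q a = 1)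
    (hp0 : ∀ a, 0 < p a) (hp1 : ∑ a, p a = 1) (hne : q ≠ p) :
    0 < ∑ a, q a * Real.log (q a / p a) := by
  have h2 : ∑ a, q a * Real.log (q a / p a) = -∑ a, q a * Real.log (p a / q a) := by
    rw [← Finset.sum_neg_distrib]
    exact Finset.sum_congr rfl fun a _ => term_flip _ _
  rw [h2]
  have hle : ∀ a ∈ Finset.univ, q a * Real.log (p a / q a) ≤ p a - q a :=
    fun a _ => term_le (hq0 a) (hp0 a).le (fun _ => hp0 a)
  by_cases H : ∃ a, 0 < q a ∧ q a ≠ p a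
  · obtain ⟨a₀, ha₀, hne₀⟩ := H
    have hstrict : q a₀ * Real.log (p a₀ / q a₀) < p a₀ - q a₀ := by
      have hd : 0 < p a₀ / q a₀ := div_pos (hp0 a₀) ha₀
      have hd1 : p a₀ / q a₀ ≠ 1 := by
        intro h
        rw [div_eq_one_iff_eq ha₀.ne'] at h
        exact hne₀ h.symm
      have := Real.log_lt_sub_one_of_pos hd hd1
      have h2 : q a₀ * Real.log (p a₀ / q a₀) < q a₀ * (p a₀ / q a₀ - 1) := by nlinarith
      calc q a₀ * Real.log (p a₀/q a₀) < q a₀ * (p a₀/q a₀ - 1) := h2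
      _ = p a₀ - q a₀ := by field_simp
    have := Finset.sum_lt_sum hle ⟨a₀, Finset.mem_univ a₀, hstrict⟩
    rw [Finset.sum_sub_distrib, hq1, hp1] at this
    linarith
  · exfalso
    push_neg at H
    have hle' : ∀ a ∈ Finset.univ, q a ≤ p a := by
      intro a _
      rcases eq_or_lt_of_le (hq0 a) with h | h
      · rw [← h]; exact (hp0 a).le
      · exact (H a h).le
    obtain ⟨a₀, hne₀⟩ := Function.ne_iff.mp hne
    have hq₀ : q a₀ = 0 := by
      by_contra h
      exact hne₀ (H a₀ (lt_of_le_of_ne (hq0 a₀) (Ne.symm h)))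
    have hstrict : q a₀ < p a₀ := hq₀ ▸ hp0 a₀
    have := Finset.sum_lt_sum hle' ⟨a₀, Finset.mem_univ a₀, hstrict⟩
    rw [hq1, hp1] at this
    exact lt_irrefl _ this

lemma klDiv_nonneg' {q p : α → ℝ} (hq0 : ∀ a, 0 ≤ q a) (hq1 : ∑ a, q a = 1)
    (hp0 : ∀ a, 0 ≤ p a) (hp1 : ∑ a, p a ≤ 1) (hqp : ∀ a, 0 < q a → 0 < p a) :
    0 ≤ klDiv q p := by
  rw [klDiv_eq]
  exact div_nonneg (nkl_nonneg hq0 hq1 hp0 hp1 hqp) (Real.log_nonneg one_le_two)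

lemma klDiv_pos' {q p : α → ℝ} (hq0 : ∀ a, 0 ≤ q a) (hq1 : ∑ a, q a = 1)
    (hp0 : ∀ a, 0 < p a) (hp1 : ∑ a, p a = 1) (hne : q ≠ p) :
    0 < klDiv q p := by
  rw [klDiv_eq]
  exact div_pos (nkl_pos hq0 hq1 hp0 hp1 hne) (Real.log_pos one_lt_two)

lemma klDiv_self' (p : α → ℝ) : klDiv p p = 0 := by
  rw [klDiv_eq]
  have : ∀ a ∈ Finset.univ, p a * Real.logb 2 (p a / p a) = 0 := by intro a _; rcases eq_or_ne (p a) 0 with h|h <;> simp [h]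
  have h0 : (∑ a, p a * Real.log (p a / p a)) = 0 := by
    refine Finset.sum_eq_zero fun a _ => ?_
    rcases eq_or_ne (p a) 0 with h|h <;> simp [h, div_self]
  rw [h0, zero_div]

end Aux

section Aux2

open Finset

variable {α : Type*} [Fintype α]

lemma log_sum_ineq (a b : α → ℝ) (ha : ∀ i, 0 ≤ a i) (hb : ∀ i, 0 ≤ b i)
    (hab : ∀ i, 0 < a i → 0 < b i) :
    (∑ i, a i) * Real.log ((∑ i, a i) / (∑ i, b i)) ≤ ∑ i, a i * Real.log (a i / b i) := by
  set A := ∑ i, a i with hA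
  set B := ∑ i, b i with hB
  have hA0 : 0 ≤ A := Finset.sum_nonneg fun i _ => ha i
  rcases eq_or_lt_of_le hA0 with h | hApos
  · have hz : ∀ i, a i = 0 := by
      intro i
      have := (Finset.sum_eq_zero_iff_of_nonneg (fun i _ => ha i)).mp h.symm i (Finset.mem_univ i)
      exact this
    simp [← hA, ← h, hz]
  · have hBpos : 0 < B := by
      rcases eq_or_lt_of_le (Finset.sum_nonneg fun i _ => hb i : (0:ℝ) ≤ B) with h | h
      · exfalso
        have hbz : ∀ i, b i = 0 :=
          fun i => (Finset.sum_eq_zero_iff_of_nonneg (fun i _ => hb i)).mp h.symm i (Finset.mem_univ i)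
        have haz : ∀ i, a i = 0 := by
          intro i
          by_contra hcon
          have := hab i (lt_of_le_of_ne (ha i) (Ne.symm hcon))
          rw [hbz i] at this; exact lt_irrefl _ this
        rw [hA] at hApos
        rw [Finset.sum_eq_zero (fun i _ => haz i)] at hApos
        exact lt_irrefl _ hApos
      · exact h
    have key : ∀ i ∈ Finset.univ,
        a i * Real.log (A / B) + (a i - A / B * b i) ≤ a i * Real.log (a i / b i) := by
      intro i _
      rcases eq_or_lt_of_le (ha i) with h | hai
      · rw [← h]
        simp only [zero_mul, zero_add, zero_sub, zero_sub]
        have : 0 ≤ A / B * b i := mul_nonneg (div_nonneg hA0 hBpos.le) (hb i)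
        linarith
      · have hbi := hab i hai
        have ht : 0 < b i * A / (a i * B) := by positivity
        have hlog := Real.log_le_sub_one_of_pos ht
        have hmul : a i * Real.log (b i * A / (a i * B)) ≤ a i * (b i * A / (a i * B) - 1) := by
          nlinarith
        have heq : a i * (b i * A / (a i * B) - 1) = A / B * b i - a i := by
          field_simp
        have hsplit : Real.log (b i * A / (a i * B)) = Real.log (A / B) - Real.log (a i / b i) := by
          rw [show b i * A / (a i * B) = (A / B) / (a i / b i) by field_simp]
          rw [Real.log_div (by positivity) (by positivity)]
        rw [hsplit] at hmul
        nlinarith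
    have hsum := Finset.sum_le_sum key
    have hlhs : ∑ i, (a i * Real.log (A / B) + (a i - A / B * b i)) =
        A * Real.log (A / B) + (A - A / B * B) := by
      rw [Finset.sum_add_distrib, Finset.sum_sub_distrib, ← Finset.sum_mul, ← Finset.mul_sum]
    have hcancel : A / B * B = A := div_mul_cancel₀ A hBpos.ne'
    rw [hlhs, hcancel] at hsum
    linarith

lemma log_sum_ineq' (a b : α → ℝ) {A B : ℝ} (hA : ∑ i, a i = A) (hB : ∑ i, b i = B)
    (ha : ∀ i, 0 ≤ a i) (hb : ∀ i, 0 ≤ b i) (hab : ∀ i, 0 < a i → 0 < b i) :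
    A * Real.log (A / B) ≤ ∑ i, a i * Real.log (a i / b i) := by
  subst hA; subst hB; exact log_sum_ineq a b ha hb hab

end Aux2

section Aux3

open Finset

variable {α : Type*} [Fintype α]

lemma nkl_le_chi2 {q p : α → ℝ} (hq0 : ∀ a, 0 ≤ q a) (hp0 : ∀ a, 0 < p a)
    (hsum : ∑ a, q a = ∑ a, p a) :
    ∑ a, q a * Real.log (q a / p a) ≤ ∑ a, (q a - p a)^2 / p a := by
  have key : ∀ a ∈ Finset.univ,
      q a * Real.log (q a / p a) ≤ (q a - p a)^2 / p a + (q a - p a) := by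
    intro a _
    rcases eq_or_lt_of_le (hq0 a) with h | hqa
    · rw [← h]
      have : ((0:ℝ) - p a)^2 / p a + (0 - p a) = 0 := by
        field_simp [(hp0 a).ne']
        ring
      rw [zero_mul, this]
    · have hd : 0 < q a / p a := div_pos hqa (hp0 a)
      have hlog := Real.log_le_sub_one_of_pos hd
      have h1 : q a * Real.log (q a / p a) ≤ q a * (q a / p a - 1) := by nlinarith
      have h2 : q a * (q a / p a - 1) = (q a - p a)^2 / p a + (q a - p a) := by
        field_simp [(hp0 a).ne']
        ring
      linarith
  have := Finset.sum_le_sum key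
  rw [Finset.sum_add_distrib, Finset.sum_sub_distrib, hsum, sub_self, add_zero] at this
  exact this

lemma klDiv_le_chi2 {q p : α → ℝ} (hq0 : ∀ a, 0 ≤ q a) (hp0 : ∀ a, 0 < p a)
    (hsum : ∑ a, q a = ∑ a, p a) :
    klDiv q p ≤ (∑ a, (q a - p a)^2 / p a) / Real.log 2 := by
  rw [klDiv_eq]
  exact div_le_div_of_nonneg_right (nkl_le_chi2 hq0 hp0 hsum) (Real.log_pos one_lt_two).le

end Aux3

section Aux4

open Finset

variable (P : 𝓧 → 𝓨 → ℝ)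

lemma margX_sum (hP1 : ∑ p : 𝓧 × 𝓨, P p.1 p.2 = 1) : ∑ x, margX P x = 1 := by
  rw [← hP1, Fintype.sum_prod_type]
  rfl

lemma margY_sum (hP1 : ∑ p : 𝓧 × 𝓨, P p.1 p.2 = 1) : ∑ y, margY P y = 1 := by
  rw [← hP1, Fintype.sum_prod_type, Finset.sum_comm]
  rfl

lemma W_row_sum (hX : ∀ x, 0 < margX P x) (x : 𝓧) :
    ∑ y, P x y / margX P x = 1 := by
  rw [← Finset.sum_div]
  exact div_self (hX x).ne'

lemma chanOut_nonneg {Q : 𝓧 → ℝ} (hP0 : ∀ x y, 0 ≤ P x y) (hX : ∀ x, 0 < margX P x)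
    (hQ0 : ∀ x, 0 ≤ Q x) (y : 𝓨) : 0 ≤ chanOut P Q y :=
  Finset.sum_nonneg fun x _ =>
    mul_nonneg (hQ0 x) (div_nonneg (hP0 x y) (hX x).le)

lemma chanOut_sum (hX : ∀ x, 0 < margX P x) (Q : 𝓧 → ℝ) :
    ∑ y, chanOut P Q y = ∑ x, Q x := by
  unfold chanOut
  rw [Finset.sum_comm]
  refine Finset.sum_congr rfl fun x _ => ?_
  rw [← Finset.mul_sum, W_row_sum P hX x, mul_one]

lemma chanOut_margX (hX : ∀ x, 0 < margX P x) :
    chanOut P (margX P) = margY P := by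
  funext y
  unfold chanOut margY
  refine Finset.sum_congr rfl fun x _ => ?_
  rw [mul_comm, div_mul_cancel₀ _ (hX x).ne']

lemma nkl_dpi (hP0 : ∀ x y, 0 ≤ P x y) (hX : ∀ x, 0 < margX P x)
    {Q : 𝓧 → ℝ} (hQ0 : ∀ x, 0 ≤ Q x) :
    ∑ y, chanOut P Q y * Real.log (chanOut P Q y / margY P y)
      ≤ ∑ x, Q x * Real.log (Q x / margX P x) := by
  have hRHS : ∑ x, Q x * Real.log (Q x / margX P x)
      = ∑ y, ∑ x, (Q x * (P x y / margX P x)) *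
          Real.log ((Q x * (P x y / margX P x)) / (margX P x * (P x y / margX P x))) := by
    rw [Finset.sum_comm]
    refine Finset.sum_congr rfl fun x _ => ?_
    have : Q x * Real.log (Q x / margX P x)
        = ∑ y, (P x y / margX P x) * (Q x * Real.log (Q x / margX P x)) := by
      rw [← Finset.sum_mul, W_row_sum P hX x, one_mul]
    rw [this]
    refine Finset.sum_congr rfl fun y _ => ?_
    rcases eq_or_ne (P x y / margX P x) 0 with h | h
    · rw [h]; ring
    · rw [mul_div_mul_right (Q x) (margX P x) h]
      ring

  rw [hRHS]
  refine Finset.sum_le_sum fun y _ => ?_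
  have hsa : ∑ x, Q x * (P x y / margX P x) = chanOut P Q y := rfl
  have hsb : ∑ x, margX P x * (P x y / margX P x) = margY P y := by
    rw [← chanOut_margX P hX]; rfl
  have := log_sum_ineq' (fun x => Q x * (P x y / margX P x))
      (fun x => margX P x * (P x y / margX P x)) hsa hsb
      (fun x => mul_nonneg (hQ0 x) (div_nonneg (hP0 x y) (hX x).le))
      (fun x => mul_nonneg (hX x).le (div_nonneg (hP0 x y) (hX x).le))
      (fun x hx => by
        have hx' : 0 < Q x * (P x y / margX P x) := hx
        have hW : 0 < P x y / margX P x := by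
          rcases lt_or_eq_of_le (div_nonneg (hP0 x y) (hX x).le) with h | h
          · exact h
          · exfalso; rw [← h, mul_zero] at hx'; exact lt_irrefl _ hx'
        exact mul_pos (hX x) hW)
  exact this

lemma klDiv_dpi (hP0 : ∀ x y, 0 ≤ P x y) (hX : ∀ x, 0 < margX P x)
    {Q : 𝓧 → ℝ} (hQ0 : ∀ x, 0 ≤ Q x) :
    klDiv (chanOut P Q) (margY P) ≤ klDiv Q (margX P) := by
  rw [klDiv_eq, klDiv_eq]
  exact div_le_div_of_nonneg_right (nkl_dpi P hP0 hX hQ0) (Real.log_pos one_lt_two).le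

end Aux4

section Aux5

open Finset

variable {U B : Type*} [Fintype U] [Fintype B]

lemma MI_decomp (G : B → U → ℝ) (hG : ∀ b u, 0 ≤ G b u) :
    mutualInfo G = ∑ u, (∑ b, G b u) *
      klDiv (fun b => G b u / ∑ b', G b' u) (fun b => ∑ u', G b u') := by
  unfold mutualInfo klDiv margX margY
  rw [Finset.sum_comm]
  refine Finset.sum_congr rfl fun u _ => ?_
  by_cases hp : ∑ b, G b u = 0
  · have hz : ∀ b, G b u = 0 := fun b =>
      (Finset.sum_eq_zero_iff_of_nonneg (fun b _ => hG b u)).mp hp b (Finset.mem_univ b)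
    simp [hz, hp]
  · rw [Finset.mul_sum]
    refine Finset.sum_congr rfl fun b _ => ?_
    have hc : (∑ b', G b' u) * (G b u / ∑ b', G b' u) = G b u := by
      rw [mul_comm]; exact div_mul_cancel₀ _ hp
    show G b u * Real.logb 2 (G b u / ((∑ u', G b u') * ∑ b', G b' u)) =
      (∑ b', G b' u) * (G b u / (∑ b', G b' u) *
        Real.logb 2 (G b u / (∑ b', G b' u) / (∑ u', G b u')))
    rw [div_div, mul_comm (∑ b', G b' u) (∑ u', G b u'), ← mul_assoc, hc]

lemma MI_nonneg (G : B → U → ℝ) (hG : ∀ b u, 0 ≤ G b u)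
    (htot : ∑ b, ∑ u, G b u ≤ 1) :
    0 ≤ mutualInfo G := by
  rw [MI_decomp G hG]
  refine Finset.sum_nonneg fun u _ => ?_
  by_cases hp : ∑ b, G b u = 0
  · rw [hp, zero_mul]
  · have hppos : 0 < ∑ b, G b u :=
      lt_of_le_of_ne (Finset.sum_nonneg fun b _ => hG b u) (Ne.symm hp)
    refine mul_nonneg hppos.le ?_
    refine klDiv_nonneg' (fun b => div_nonneg (hG b u) hppos.le) ?_
      (fun b => Finset.sum_nonneg fun u' _ => hG b u') htot ?_
    · rw [← Finset.sum_div]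
      exact div_self hp
    · intro b hb
      have hGb : 0 < G b u := by
        by_contra hcon
        push_neg at hcon
        have h0 : G b u = 0 := le_antisymm hcon (hG b u)
        rw [h0, zero_div] at hb
        exact lt_irrefl _ hb
      exact lt_of_lt_of_le hGb (Finset.single_le_sum (fun u' _ => hG b u') (Finset.mem_univ u))

end Aux5

set_option maxHeartbeats 2000000 in
/-- tightness of the strong DPI constant.  If `I(X;Y) > 0`, then
`s*(X;Y)` equals the supremum of `I(Y;U)/I(X;U)` over all finite alphabets `𝓤` and all
Markov chains `U ↔ X ↔ Y` (joints of the form `p(u,x) P_{Y|X}(y|x)` with `(X,Y)`-marginal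
`P`) having `I(X;U) > 0`.  Here such a Markov chain is described by the joint pmf `J` of
`(U,X)`, whose `x`-marginal must be `P_X`; the `(U,Y)`-joint is then
`(u,y) ↦ ∑ x, J u x * P x y / P_X x`. -/
theorem sStar_eq_sup_MI_ratio (P : 𝓧 → 𝓨 → ℝ)
    (hP : IsPMF (fun p : 𝓧 × 𝓨 => P p.1 p.2))
    (hX : ∀ x, 0 < margX P x) (hY : ∀ y, 0 < margY P y)
    (hXY : 0 < mutualInfo P) :
    sStar P = sSup { r : ℝ |
      ∃ (𝓤 : Type) (_ : Fintype 𝓤) (J : 𝓤 → 𝓧 → ℝ),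
        IsPMF (fun p : 𝓤 × 𝓧 => J p.1 p.2) ∧
        (∀ x, ∑ u, J u x = margX P x) ∧
        0 < mutualInfo (fun (x : 𝓧) (u : 𝓤) => J u x) ∧
        r = mutualInfo (fun (y : 𝓨) (u : 𝓤) => ∑ x, J u x * (P x y / margX P x)) /
            mutualInfo (fun (x : 𝓧) (u : 𝓤) => J u x) } := by
  classical
  have hlog2 : (0:ℝ) < Real.log 2 := Real.log_pos one_lt_two
  have hP0 : ∀ x y, 0 ≤ P x y := fun x y => hP.1 (x, y)
  have hP1 : ∑ p : 𝓧 × 𝓨, P p.1 p.2 = 1 := hP.2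
  have hmX1 : ∑ x, margX P x = 1 := margX_sum P hP1
  have hmY1 : ∑ y, margY P y = 1 := margY_sum P hP1
  have hmXle : ∀ x, margX P x ≤ 1 := fun x => by
    calc margX P x ≤ ∑ x', margX P x' :=
          Finset.single_le_sum (fun x' _ => (hX x').le) (Finset.mem_univ x)
    _ = 1 := hmX1
  unfold sStar
  set S1 : Set ℝ := { r : ℝ | ∃ Q : 𝓧 → ℝ, IsPMF Q ∧ Q ≠ margX P ∧
    r = klDiv (chanOut P Q) (margY P) / klDiv Q (margX P) } with hS1
  set S2 : Set ℝ := { r : ℝ |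
      ∃ (𝓤 : Type) (_ : Fintype 𝓤) (J : 𝓤 → 𝓧 → ℝ),
        IsPMF (fun p : 𝓤 × 𝓧 => J p.1 p.2) ∧
        (∀ x, ∑ u, J u x = margX P x) ∧
        0 < mutualInfo (fun (x : 𝓧) (u : 𝓤) => J u x) ∧
        r = mutualInfo (fun (y : 𝓨) (u : 𝓤) => ∑ x, J u x * (P x y / margX P x)) /
            mutualInfo (fun (x : 𝓧) (u : 𝓤) => J u x) } with hS2
  -- generic facts about Markov chains J
  have hKrow : ∀ (𝓤 : Type) [Fintype 𝓤] (J : 𝓤 → 𝓧 → ℝ) (u : 𝓤),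
      ∑ y, ∑ x, J u x * (P x y / margX P x) = ∑ x, J u x := by
    intro 𝓤 _ J u
    rw [Finset.sum_comm]
    refine Finset.sum_congr rfl fun x _ => ?_
    rw [← Finset.mul_sum, W_row_sum P hX x, mul_one]
  have hKmarg : ∀ (𝓤 : Type) [Fintype 𝓤] (J : 𝓤 → 𝓧 → ℝ),
      (∀ x, ∑ u, J u x = margX P x) →
      ∀ y, ∑ u, ∑ x, J u x * (P x y / margX P x) = margY P y := by
    intro 𝓤 _ J hJm y
    rw [Finset.sum_comm]
    have h : ∀ x, ∑ u, J u x * (P x y / margX P x) = P x y := by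
      intro x
      rw [← Finset.sum_mul, hJm x, mul_comm, div_mul_cancel₀ _ (hX x).ne']
    rw [Finset.sum_congr rfl fun x _ => h x]
    rfl
  -- S1 is bounded above by 1
  have hS1le1 : ∀ r ∈ S1, r ≤ 1 := by
    intro r hr
    rw [hS1] at hr
    obtain ⟨Q, ⟨hQ0, hQ1⟩, hQne, rfl⟩ := hr
    have hDX : 0 < klDiv Q (margX P) := klDiv_pos' hQ0 hQ1 hX hmX1 hQne
    rw [div_le_one hDX]
    exact klDiv_dpi P hP0 hX hQ0
  have hBdd1 : BddAbove S1 := ⟨1, hS1le1⟩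
  -- Step A : every element of S2 is at most sSup S1
  have stepA : ∀ r ∈ S2, r ≤ sSup S1 := by
    intro r hr
    rw [hS2] at hr
    obtain ⟨𝓤, hUf, J, hJpmf, hJm, hMIXpos, hre⟩ := hr
    letI := hUf
    have hJ0 : ∀ u x, 0 ≤ J u x := fun u x => hJpmf.1 (u, x)
    have hdX : mutualInfo (fun x (u : 𝓤) => J u x) =
        ∑ u, (∑ x, J u x) * klDiv (fun x => J u x / ∑ x', J u x') (margX P) := by
      calc mutualInfo (fun x (u : 𝓤) => J u x)
          = ∑ u, (∑ x, J u x) * klDiv (fun x => J u x / ∑ x', J u x')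
              (fun x => ∑ u', J u' x) :=
            MI_decomp (fun x (u : 𝓤) => J u x) (fun x u => hJ0 u x)
        _ = _ := by rw [show (fun x => ∑ u', J u' x) = margX P from funext hJm]
    have hdY : mutualInfo (fun y (u : 𝓤) => ∑ x, J u x * (P x y / margX P x)) =
        ∑ u, (∑ x, J u x) * klDiv
          (fun y => (∑ x, J u x * (P x y / margX P x)) / ∑ x, J u x) (margY P) := by
      calc mutualInfo (fun y (u : 𝓤) => ∑ x, J u x * (P x y / margX P x))
          = ∑ u, (∑ y, ∑ x, J u x * (P x y / margX P x)) * klDiv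
              (fun y => (∑ x, J u x * (P x y / margX P x)) /
                ∑ y', ∑ x, J u x * (P x y' / margX P x))
              (fun y => ∑ u', ∑ x, J u' x * (P x y / margX P x)) :=
            MI_decomp _ (fun y u => Finset.sum_nonneg fun x _ =>
              mul_nonneg (hJ0 u x) (div_nonneg (hP0 x y) (hX x).le))
        _ = _ := by
            rw [show (fun y => ∑ u', ∑ x, J u' x * (P x y / margX P x)) = margY P from
              funext (hKmarg 𝓤 J hJm)]
            refine Finset.sum_congr rfl fun u _ => ?_
            rw [hKrow 𝓤 J u]
    have hu : ∀ u : 𝓤, (∑ x, J u x) * klDiv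
          (fun y => (∑ x, J u x * (P x y / margX P x)) / ∑ x, J u x) (margY P)
        ≤ sSup S1 * ((∑ x, J u x) * klDiv (fun x => J u x / ∑ x', J u x') (margX P)) := by
      intro u
      by_cases hp : ∑ x, J u x = 0
      · rw [hp]
        simp
      · have hppos : 0 < ∑ x, J u x :=
          lt_of_le_of_ne (Finset.sum_nonneg fun x _ => hJ0 u x) (Ne.symm hp)
        have hQu0 : ∀ x, 0 ≤ J u x / ∑ x', J u x' :=
          fun x => div_nonneg (hJ0 u x) hppos.le
        have hQu1 : ∑ x, J u x / ∑ x', J u x' = 1 := by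
          rw [← Finset.sum_div]
          exact div_self hp
        have hKQ : (fun y => (∑ x, J u x * (P x y / margX P x)) / ∑ x, J u x)
            = chanOut P (fun x => J u x / ∑ x', J u x') := by
          funext y
          rw [Finset.sum_div]
          refine Finset.sum_congr rfl fun x _ => ?_
          rw [mul_div_right_comm]
        rw [hKQ]
        by_cases hQP : (fun x => J u x / ∑ x', J u x') = margX P
        · rw [hQP, chanOut_margX P hX, klDiv_self', klDiv_self']
          simp
        · have hmem : klDiv (chanOut P (fun x => J u x / ∑ x', J u x')) (margY P) /
              klDiv (fun x => J u x / ∑ x', J u x') (margX P) ∈ S1 := by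
            rw [hS1]
            exact ⟨_, ⟨hQu0, hQu1⟩, hQP, rfl⟩
          have hle := le_csSup hBdd1 hmem
          have hDX : 0 < klDiv (fun x => J u x / ∑ x', J u x') (margX P) :=
            klDiv_pos' hQu0 hQu1 hX hmX1 hQP
          rw [div_le_iff₀ hDX] at hle
          calc (∑ x, J u x) * klDiv (chanOut P (fun x => J u x / ∑ x', J u x')) (margY P)
              ≤ (∑ x, J u x) * (sSup S1 * klDiv (fun x => J u x / ∑ x', J u x') (margX P)) :=
                mul_le_mul_of_nonneg_left hle hppos.le
            _ = sSup S1 * ((∑ x, J u x) *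
                klDiv (fun x => J u x / ∑ x', J u x') (margX P)) := by ring
    have hsum : mutualInfo (fun y (u : 𝓤) => ∑ x, J u x * (P x y / margX P x)) ≤
        sSup S1 * mutualInfo (fun x (u : 𝓤) => J u x) := by
      rw [hdX, hdY, Finset.mul_sum]
      exact Finset.sum_le_sum fun u _ => hu u
    rw [hre, div_le_iff₀ hMIXpos]
    exact hsum
  -- a witness element of S2 that is nonnegative
  have witness : ∃ r₀ ∈ S2, (0:ℝ) ≤ r₀ := by
    have e := Fintype.equivFin 𝓨
    set J : Fin (Fintype.card 𝓨) → 𝓧 → ℝ := fun u x => P x (e.symm u) with hJw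
    have hJ0 : ∀ u x, 0 ≤ J u x := fun u x => hP0 x (e.symm u)
    have hJm : ∀ x, ∑ u, J u x = margX P x := by
      intro x
      show ∑ u, P x (e.symm u) = margX P x
      exact Equiv.sum_comp e.symm (fun y => P x y)
    have hJpmf : IsPMF (fun p : Fin (Fintype.card 𝓨) × 𝓧 => J p.1 p.2) := by
      constructor
      · exact fun p => hJ0 p.1 p.2
      · rw [Fintype.sum_prod_type]
        calc ∑ u, ∑ x, J u x = ∑ u, ∑ x, P x (e.symm u) := rfl
          _ = ∑ y, ∑ x, P x y := Equiv.sum_comp e.symm (fun y => ∑ x, P x y)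
          _ = ∑ y, margY P y := rfl
          _ = 1 := hmY1
    have hMIeq : mutualInfo (fun x (u : Fin (Fintype.card 𝓨)) => J u x) = mutualInfo P := by
      unfold mutualInfo
      refine Finset.sum_congr rfl fun x _ => ?_
      refine Fintype.sum_equiv e.symm _ _ fun u => ?_
      have h1 : margX (fun x (u : Fin (Fintype.card 𝓨)) => J u x) x = margX P x := hJm x
      have h2 : margY (fun x (u : Fin (Fintype.card 𝓨)) => J u x) u = margY P (e.symm u) := rfl
      rw [h1, h2]
    have hMIXpos' : 0 < mutualInfo (fun x (u : Fin (Fintype.card 𝓨)) => J u x) := by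
      rw [hMIeq]; exact hXY
    have hnum0 : 0 ≤ mutualInfo
        (fun y (u : Fin (Fintype.card 𝓨)) => ∑ x, J u x * (P x y / margX P x)) := by
      refine MI_nonneg _ (fun y u => Finset.sum_nonneg fun x _ =>
        mul_nonneg (hJ0 u x) (div_nonneg (hP0 x y) (hX x).le)) ?_
      rw [Finset.sum_congr rfl fun y _ => hKmarg (Fin (Fintype.card 𝓨)) J hJm y, hmY1]
    refine ⟨_, ?_, div_nonneg hnum0 hMIXpos'.le⟩
    rw [hS2]
    exact ⟨Fin (Fintype.card 𝓨), inferInstance, J, hJpmf, hJm, hMIXpos', rfl⟩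
  obtain ⟨r₀, hr₀mem, hr₀0⟩ := witness
  have hs1_0 : 0 ≤ sSup S1 := le_trans hr₀0 (stepA r₀ hr₀mem)
  have hBdd2 : BddAbove S2 := ⟨sSup S1, fun r hr => stepA r hr⟩
  have hs2_0 : 0 ≤ sSup S2 := le_trans hr₀0 (le_csSup hBdd2 hr₀mem)
  -- minimum of the x-marginal
  have hXne : Nonempty 𝓧 := by
    by_contra h
    rw [not_nonempty_iff] at h
    rw [Finset.univ_eq_empty, Finset.sum_empty] at hmX1
    norm_num at hmX1
  obtain ⟨xm, -, hxm⟩ := Finset.exists_min_image Finset.univ (margX P) Finset.univ_nonempty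
  set c : ℝ := margX P xm with hcdef
  have hc0 : 0 < c := hX xm
  have hcle : ∀ x, c ≤ margX P x := fun x => hxm x (Finset.mem_univ x)
  have hcle1 : c ≤ 1 := hmXle xm
  set C : ℝ := (Fintype.card 𝓧 : ℝ) * 4 / (c * Real.log 2) with hCdef
  have hcard : (0:ℝ) < (Fintype.card 𝓧 : ℝ) := by
    exact_mod_cast Fintype.card_pos
  have hCpos : 0 < C := by
    apply div_pos
    · linarith
    · exact mul_pos hc0 hlog2
  -- Step B : every element of S1 is at most sSup S2
  have stepB : ∀ r ∈ S1, r ≤ sSup S2 := by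
    intro r hr
    rw [hS1] at hr
    obtain ⟨Q, ⟨hQ0, hQ1⟩, hQne, rfl⟩ := hr
    have hQle1 : ∀ x, Q x ≤ 1 := fun x => by
      calc Q x ≤ ∑ x', Q x' := Finset.single_le_sum (fun x' _ => hQ0 x') (Finset.mem_univ x)
      _ = 1 := hQ1
    have hAX : 0 < klDiv Q (margX P) := klDiv_pos' hQ0 hQ1 hX hmX1 hQne
    have hAY0 : 0 ≤ klDiv (chanOut P Q) (margY P) :=
      klDiv_nonneg' (chanOut_nonneg P hP0 hX hQ0)
        (by rw [chanOut_sum P hX, hQ1]) (fun y => (hY y).le) (le_of_eq hmY1)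
        (fun y _ => hY y)
    have key : ∀ ε : ℝ, 0 < ε → ε ≤ c / 2 →
        klDiv (chanOut P Q) (margY P) ≤ sSup S2 * (klDiv Q (margX P) + C * ε) := by
      intro ε hε0 hεc
      have hε1 : ε < 1 := by linarith
      have h1ε : 0 < 1 - ε := by linarith
      set R : 𝓧 → ℝ := fun x => (margX P x - ε * Q x) / (1 - ε) with hR
      set J : Bool → 𝓧 → ℝ := fun u x => cond u (ε * Q x) (margX P x - ε * Q x) with hJ
      have hεQ : ∀ x, ε * Q x ≤ c / 2 := fun x => by nlinarith [hQ0 x, hQle1 x]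
      have hJf0 : ∀ x, 0 < margX P x - ε * Q x := fun x => by
        have h1 := hcle x; have h2 := hεQ x; linarith
      have hJ0 : ∀ u x, 0 ≤ J u x := by
        intro u x
        cases u
        · show (0:ℝ) ≤ margX P x - ε * Q x
          exact (hJf0 x).le
        · show (0:ℝ) ≤ ε * Q x
          exact mul_nonneg hε0.le (hQ0 x)
      have hsT : ∑ x, J true x = ε := by
        show ∑ x, ε * Q x = ε
        rw [← Finset.mul_sum, hQ1, mul_one]
      have hsF : ∑ x, J false x = 1 - ε := by
        show ∑ x, (margX P x - ε * Q x) = 1 - ε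
        rw [Finset.sum_sub_distrib, hmX1, ← Finset.mul_sum, hQ1, mul_one]
      have hJm : ∀ x, ∑ u, J u x = margX P x := by
        intro x
        rw [Fintype.sum_bool]
        show ε * Q x + (margX P x - ε * Q x) = margX P x
        ring
      have hJpmf : IsPMF (fun p : Bool × 𝓧 => J p.1 p.2) := by
        constructor
        · exact fun p => hJ0 p.1 p.2
        · rw [Fintype.sum_prod_type, Fintype.sum_bool, hsT, hsF]
          ring
      have hR0 : ∀ x, 0 ≤ R x := fun x => div_nonneg (hJf0 x).le h1ε.le
      have hR1 : ∑ x, R x = 1 := by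
        show ∑ x, (margX P x - ε * Q x) / (1 - ε) = 1
        rw [← Finset.sum_div, Finset.sum_sub_distrib, hmX1, ← Finset.mul_sum, hQ1, mul_one]
        exact div_self h1ε.ne'
      have hRx : ∀ x, (1 - ε) * R x = margX P x - ε * Q x := fun x => by
        show (1 - ε) * ((margX P x - ε * Q x) / (1 - ε)) = _
        rw [mul_comm]
        exact div_mul_cancel₀ _ h1ε.ne'
      have hQuT : (fun x => J true x / ε) = Q := by
        funext x
        show ε * Q x / ε = Q x
        exact mul_div_cancel_left₀ _ hε0.ne'
      have hQuF : (fun x => J false x / (1 - ε)) = R := by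
        funext x
        show (margX P x - ε * Q x) / (1 - ε) = R x
        rw [hR]
      have hMIX : mutualInfo (fun x (u : Bool) => J u x) =
          ε * klDiv Q (margX P) + (1 - ε) * klDiv R (margX P) := by
        calc mutualInfo (fun x (u : Bool) => J u x)
            = ∑ u, (∑ x, J u x) * klDiv (fun x => J u x / ∑ x', J u x')
                (fun x => ∑ u', J u' x) :=
              MI_decomp (fun x (u : Bool) => J u x) (fun x u => hJ0 u x)
          _ = _ := by
              rw [Fintype.sum_bool,
                show (fun x => ∑ u', J u' x) = margX P from funext hJm, hsT, hsF,
                hQuT, hQuF]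
      have hKmT : (fun y => (∑ x, J true x * (P x y / margX P x)) / ε) = chanOut P Q := by
        funext y
        rw [show ∑ x, J true x * (P x y / margX P x)
            = ε * ∑ x, Q x * (P x y / margX P x) from by
          rw [Finset.mul_sum]
          refine Finset.sum_congr rfl fun x _ => ?_
          show ε * Q x * (P x y / margX P x) = ε * (Q x * (P x y / margX P x))
          ring]
        exact mul_div_cancel_left₀ _ hε0.ne'
      have hKmF : (fun y => (∑ x, J false x * (P x y / margX P x)) / (1 - ε))
          = chanOut P R := by
        funext y
        rw [show ∑ x, J false x * (P x y / margX P x)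
            = (1 - ε) * ∑ x, R x * (P x y / margX P x) from by
          rw [Finset.mul_sum]
          refine Finset.sum_congr rfl fun x _ => ?_
          rw [← mul_assoc, hRx x]
          rfl]
        exact mul_div_cancel_left₀ _ h1ε.ne'
      have hMIY : mutualInfo (fun y (u : Bool) => ∑ x, J u x * (P x y / margX P x)) =
          ε * klDiv (chanOut P Q) (margY P) +
            (1 - ε) * klDiv (chanOut P R) (margY P) := by
        calc mutualInfo (fun y (u : Bool) => ∑ x, J u x * (P x y / margX P x))
            = ∑ u, (∑ y, ∑ x, J u x * (P x y / margX P x)) * klDiv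
                (fun y => (∑ x, J u x * (P x y / margX P x)) /
                  ∑ y', ∑ x, J u x * (P x y' / margX P x))
                (fun y => ∑ u', ∑ x, J u' x * (P x y / margX P x)) :=
              MI_decomp _ (fun y u => Finset.sum_nonneg fun x _ =>
                mul_nonneg (hJ0 u x) (div_nonneg (hP0 x y) (hX x).le))
          _ = _ := by
              rw [Fintype.sum_bool,
                show (fun y => ∑ u', ∑ x, J u' x * (P x y / margX P x)) = margY P from
                  funext (hKmarg Bool J hJm),
                hKrow Bool J true, hKrow Bool J false, hsT, hsF, hKmT, hKmF]
      have hchiterm : ∀ x, (R x - margX P x)^2 / margX P x ≤ 4 * ε^2 / c := by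
        intro x
        have hdiff : R x - margX P x = ε * (margX P x - Q x) / (1 - ε) := by
          show (margX P x - ε * Q x) / (1 - ε) - margX P x = _
          field_simp
          ring
        rw [hdiff, div_pow]
        have hnum : (ε * (margX P x - Q x))^2 ≤ ε^2 := by
          have h1 : -1 ≤ margX P x - Q x := by linarith [hQle1 x, (hX x).le]
          have h2 : margX P x - Q x ≤ 1 := by linarith [hmXle x, hQ0 x]
          have h3 : 0 ≤ ε^2 * ((1 - (margX P x - Q x)) * (1 + (margX P x - Q x))) :=
            mul_nonneg (sq_nonneg ε) (mul_nonneg (by linarith) (by linarith))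
          nlinarith [h3]
        have hden : (1/4 : ℝ) ≤ (1 - ε)^2 := by nlinarith [sq_nonneg ((1:ℝ)/2 - ε), hεc, hcle1]
        have hA : (ε * (margX P x - Q x))^2 / (1 - ε)^2 ≤ 4 * ε^2 := by
          rw [div_le_iff₀ (by positivity)]
          nlinarith [sq_nonneg ε]
        exact div_le_div₀ (by positivity) hA hc0 (hcle x)
      have hDR : klDiv R (margX P) ≤ C * ε^2 := by
        have h1 := klDiv_le_chi2 hR0 hX (by rw [hR1, hmX1])
        have h2 : ∑ x, (R x - margX P x)^2 / margX P x
            ≤ (Fintype.card 𝓧 : ℝ) * (4 * ε^2 / c) := by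
          calc ∑ x, (R x - margX P x)^2 / margX P x
              ≤ ∑ _x : 𝓧, (4 * ε^2 / c) := Finset.sum_le_sum fun x _ => hchiterm x
            _ = (Fintype.card 𝓧 : ℝ) * (4 * ε^2 / c) := by
                rw [Finset.sum_const, Finset.card_univ, nsmul_eq_mul]
        calc klDiv R (margX P)
            ≤ (∑ x, (R x - margX P x)^2 / margX P x) / Real.log 2 := h1
          _ ≤ ((Fintype.card 𝓧 : ℝ) * (4 * ε^2 / c)) / Real.log 2 :=
              div_le_div_of_nonneg_right h2 hlog2.le
          _ = C * ε^2 := by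
              rw [hCdef]
              field_simp
      have hDR0 : 0 ≤ klDiv R (margX P) :=
        klDiv_nonneg' hR0 hR1 (fun x => (hX x).le) (le_of_eq hmX1) (fun x _ => hX x)
      have hDRY0 : 0 ≤ klDiv (chanOut P R) (margY P) :=
        klDiv_nonneg' (chanOut_nonneg P hP0 hX hR0)
          (by rw [chanOut_sum P hX, hR1]) (fun y => (hY y).le) (le_of_eq hmY1)
          (fun y _ => hY y)
      have hMIXpos' : 0 < mutualInfo (fun x (u : Bool) => J u x) := by
        rw [hMIX]
        nlinarith [mul_pos hε0 hAX, mul_nonneg h1ε.le hDR0]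
      have hmem2 : mutualInfo (fun y (u : Bool) => ∑ x, J u x * (P x y / margX P x)) /
          mutualInfo (fun x (u : Bool) => J u x) ∈ S2 := by
        rw [hS2]
        exact ⟨Bool, inferInstance, J, hJpmf, hJm, hMIXpos', rfl⟩
      have hle2 := le_csSup hBdd2 hmem2
      have hratio : klDiv (chanOut P Q) (margY P) / (klDiv Q (margX P) + C * ε) ≤
          mutualInfo (fun y (u : Bool) => ∑ x, J u x * (P x y / margX P x)) /
          mutualInfo (fun x (u : Bool) => J u x) := by
        rw [hMIX, hMIY]
        have hnum : ε * klDiv (chanOut P Q) (margY P) ≤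
            ε * klDiv (chanOut P Q) (margY P) +
              (1 - ε) * klDiv (chanOut P R) (margY P) :=
          le_add_of_nonneg_right (mul_nonneg h1ε.le hDRY0)
        have hden : ε * klDiv Q (margX P) + (1 - ε) * klDiv R (margX P)
            ≤ ε * (klDiv Q (margX P) + C * ε) := by
          have h3 : (1 - ε) * klDiv R (margX P) ≤ C * ε^2 := by
            calc (1 - ε) * klDiv R (margX P) ≤ 1 * klDiv R (margX P) :=
                  mul_le_mul_of_nonneg_right (by linarith) hDR0
              _ = klDiv R (margX P) := one_mul _
              _ ≤ C * ε^2 := hDR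
          have h4 : ε * (klDiv Q (margX P) + C * ε) = ε * klDiv Q (margX P) + C * ε^2 := by
            ring
          linarith
        have hdpos : 0 < ε * klDiv Q (margX P) + (1 - ε) * klDiv R (margX P) := by
          nlinarith [mul_pos hε0 hAX, mul_nonneg h1ε.le hDR0]
        calc klDiv (chanOut P Q) (margY P) / (klDiv Q (margX P) + C * ε)
            = ε * klDiv (chanOut P Q) (margY P) /
                (ε * (klDiv Q (margX P) + C * ε)) :=
              (mul_div_mul_left _ _ hε0.ne').symm
          _ ≤ (ε * klDiv (chanOut P Q) (margY P) +
                (1 - ε) * klDiv (chanOut P R) (margY P)) /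
              (ε * klDiv Q (margX P) + (1 - ε) * klDiv R (margX P)) :=
              div_le_div₀ (le_trans (mul_nonneg hε0.le hAY0) hnum) hnum hdpos hden
      have hfin := le_trans hratio hle2
      rw [div_le_iff₀ (add_pos hAX (mul_pos hCpos hε0))] at hfin
      calc klDiv (chanOut P Q) (margY P)
          ≤ sSup S2 * (klDiv Q (margX P) + C * ε) := hfin
        _ = sSup S2 * (klDiv Q (margX P) + C * ε) := rfl
    have hfinal : klDiv (chanOut P Q) (margY P) ≤ sSup S2 * klDiv Q (margX P) := by
      by_contra hcon
      push_neg at hcon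
      set t := klDiv (chanOut P Q) (margY P) - sSup S2 * klDiv Q (margX P) with ht
      have ht0 : 0 < t := by rw [ht]; linarith
      have hsC : 0 ≤ sSup S2 * C := mul_nonneg hs2_0 hCpos.le
      set ε : ℝ := min (c / 2) (t / (sSup S2 * C + 1)) with hε
      have hε0 : 0 < ε := lt_min (by linarith) (div_pos ht0 (by linarith))
      have hεc : ε ≤ c / 2 := min_le_left _ _
      have h1 := key ε hε0 hεc
      have h2 : sSup S2 * C * ε ≤ sSup S2 * C * (t / (sSup S2 * C + 1)) :=
        mul_le_mul_of_nonneg_left (min_le_right _ _) hsC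
      have h3 : sSup S2 * C * (t / (sSup S2 * C + 1)) < t := by
        rw [show sSup S2 * C * (t / (sSup S2 * C + 1))
            = t * (sSup S2 * C / (sSup S2 * C + 1)) from by ring]
        have hlt : sSup S2 * C / (sSup S2 * C + 1) < 1 := by
          rw [div_lt_one (by linarith)]
          linarith
        nlinarith
      have h5 : sSup S2 * (klDiv Q (margX P) + C * ε)
          = sSup S2 * klDiv Q (margX P) + sSup S2 * C * ε := by ring
      rw [h5] at h1
      linarith
    rw [div_le_iff₀ hAX]
    exact hfinal
  refine le_antisymm ?_ ?_
  · exact Real.sSup_le stepB hs2_0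
  · exact Real.sSup_le stepA hs1_0


end
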